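/- Let (π,T,S) be a covariant representation of L on L^p_ν(Ω). Then the smallest closed (unital) subalgebra of B(L^p_ν(Ω)) containing {π(a) : a ∈ C(X)} ∪ {T, S} coincides with the smallest closed subalgebra containing {T_i, S_i : i = 1,…,n}. In particular every π(a), a ∈ C(X), lies in the closed subalgebra generated by the T_i and S_i, and T = π(ϱ^{1/p}) Σ_{i=1}^n T_i and S = Σ_{i=1}^n S_i π(ϱ^{1/q}) lie in it as well. -/

import Mathlib

open MeasureTheory
open scoped ENNReal

noncomputable section

/-- The Bernoulli shift space `X = {1,…,n}^ℕ`, modelled as `ℕ → Fin n`. -/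
abbrev BSpace (n : ℕ) := ℕ → Fin n

/-- The shift map `φ(x₁,x₂,x₃,…) = (x₂,x₃,…)`. -/
def shift (n : ℕ) (x : BSpace n) : BSpace n := fun k => x (k + 1)

lemma shift_continuous (n : ℕ) : Continuous (shift n) :=
  continuous_pi fun k => continuous_apply (k + 1)

/-- The shift map as a continuous map. -/
def shiftCM (n : ℕ) : C(BSpace n, BSpace n) := ⟨shift n, shift_continuous n⟩

/-- The preimage section `iy = (i, y₁, y₂, …)` of the shift. -/
def cons (n : ℕ) (i : Fin n) (x : BSpace n) : BSpace n :=
  fun k => Nat.casesOn k i fun m => x m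

lemma cons_continuous (n : ℕ) (i : Fin n) : Continuous (cons n i) := by
  apply continuous_pi
  intro k
  cases k with
  | zero => exact continuous_const
  | succ m => exact continuous_apply m

/-- The transfer (Ruelle–Perron–Frobenius) operator
`L(a)(y) = Σ_{x ∈ φ⁻¹(y)} ϱ(x) a(x) = Σ_{i=1}^n ϱ(iy) a(iy)`. -/
def transfer (n : ℕ) (ϱ : C(BSpace n, ℝ)) (a : C(BSpace n, ℂ)) : C(BSpace n, ℂ) :=
  ⟨fun y => ∑ i : Fin n, (ϱ (cons n i y) : ℂ) * a (cons n i y), by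
    refine continuous_finset_sum _ fun i _ => ?_
    exact (Complex.continuous_ofReal.comp (ϱ.continuous.comp (cons_continuous n i))).mul
      (a.continuous.comp (cons_continuous n i))⟩

lemma isClopen_cyl (n : ℕ) (i : Fin n) : IsClopen {x : BSpace n | x 0 = i} :=
  (isClopen_discrete ({i} : Set (Fin n))).preimage (continuous_apply 0)

/-- The power `ϱ^r` of the (strictly positive) potential, as a continuous map. -/
def rhoPow (n : ℕ) (ϱ : C(BSpace n, ℝ)) (hϱ : ∀ x, 0 < ϱ x) (r : ℝ) : C(BSpace n, ℝ) :=
  ⟨fun x => ϱ x ^ r, ϱ.continuous.rpow_const fun x => Or.inl (hϱ x).ne'⟩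

/-- The complex-valued power `ϱ^r` of the potential, as a continuous map. -/
def rhoPowC (n : ℕ) (ϱ : C(BSpace n, ℝ)) (hϱ : ∀ x, 0 < ϱ x) (r : ℝ) : C(BSpace n, ℂ) :=
  ⟨fun x => ((ϱ x ^ r : ℝ) : ℂ), Complex.continuous_ofReal.comp (rhoPow n ϱ hϱ r).continuous⟩

/-- The continuous function `g·1_{X_i}` (product of `g` with the indicator of the clopen
cylinder `X_i = {x : x₁ = i}`), as a complex-valued continuous map. -/
def wInd (n : ℕ) (i : Fin n) (g : C(BSpace n, ℝ)) : C(BSpace n, ℂ) :=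
  ⟨fun x => if x 0 = i then (g x : ℂ) else 0, by
    refine Continuous.if (fun x hx => ?_)
      (Complex.continuous_ofReal.comp g.continuous) continuous_const
    rw [(isClopen_cyl n i).frontier_eq] at hx
    exact absurd hx (Set.notMem_empty x)⟩

/-- The operator `T_i = π(ϱ^{-1/p}·1_{X_i}) T`. -/
def TOp {A : Type*} [Mul A] (n : ℕ) (ϱ : C(BSpace n, ℝ)) (hϱ : ∀ x, 0 < ϱ x) (p : ℝ≥0∞)
    (π : C(BSpace n, ℂ) → A) (T : A) (i : Fin n) : A :=
  π (wInd n i (rhoPow n ϱ hϱ (-(1 / p.toReal)))) * T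

/-- The operator `S_i = S π(ϱ^{-1/q}·1_{X_i})`, where `1/q = 1 - 1/p`
(with the convention `ϱ^{-1/q} = ϱ^0 = 1` when `p = 1`). -/
def SOp {A : Type*} [Mul A] (n : ℕ) (ϱ : C(BSpace n, ℝ)) (hϱ : ∀ x, 0 < ϱ x) (p : ℝ≥0∞)
    (π : C(BSpace n, ℂ) → A) (S : A) (i : Fin n) : A :=
  S * π (wInd n i (rhoPow n ϱ hϱ (-(1 - 1 / p.toReal))))

/-- The indicator of the cylinder set `X_{i₁…i_N} = {x : x₁ = i₁, …, x_N = i_N}`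
determined by the word `w = (i₁,…,i_N)`, as a continuous map. -/
def cylCM (n N : ℕ) (w : Fin N → Fin n) : C(BSpace n, ℂ) :=
  ⟨fun x => if (fun k : Fin N => x k) = w then 1 else 0, by
    have hclopen : IsClopen {x : BSpace n | (fun k : Fin N => x k) = w} :=
      (isClopen_discrete ({w} : Set (Fin N → Fin n))).preimage
        (continuous_pi fun k => continuous_apply (k : ℕ))
    refine Continuous.if (fun x hx => ?_) continuous_const continuous_const
    rw [hclopen.frontier_eq] at hx
    exact absurd hx (Set.notMem_empty x)⟩


section Aux
variable (n : ℕ) (ϱ : C(BSpace n, ℝ)) (hϱ : ∀ x, 0 < ϱ x)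

@[simp] lemma cons_zero (i : Fin n) (y : BSpace n) : cons n i y 0 = i := rfl

lemma wInd_apply (i : Fin n) (g : C(BSpace n, ℝ)) (x : BSpace n) :
    wInd n i g x = if x 0 = i then (g x : ℂ) else 0 := rfl

lemma sum_wInd_rhoPow (r : ℝ) :
    (∑ i : Fin n, wInd n i (rhoPow n ϱ hϱ r)) = rhoPowC n ϱ hϱ r := by
  ext x
  simp [wInd, rhoPowC, rhoPow, ContinuousMap.sum_apply]

lemma rhoPowC_mul_neg (r : ℝ) :
    rhoPowC n ϱ hϱ r * rhoPowC n ϱ hϱ (-r) = 1 := by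
  ext x
  simp only [ContinuousMap.mul_apply, rhoPowC, ContinuousMap.coe_mk, ContinuousMap.one_apply]
  rw [← Complex.ofReal_mul, ← Real.rpow_add (hϱ x)]
  simp

lemma transfer_vw (p : ℝ≥0∞) (i j : Fin n) :
    transfer n ϱ (wInd n j (rhoPow n ϱ hϱ (-(1 - 1 / p.toReal)))
      * wInd n i (rhoPow n ϱ hϱ (-(1 / p.toReal)))) = if i = j then 1 else 0 := by
  ext y
  simp only [transfer, ContinuousMap.coe_mk, ContinuousMap.mul_apply, wInd_apply, cons_zero,
    rhoPow, ContinuousMap.coe_mk]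
  rw [Finset.sum_eq_single i]
  · by_cases h : i = j
    · subst h
      have key : ϱ (cons n i y) * (ϱ (cons n i y) ^ (-(1 - 1 / p.toReal))
          * ϱ (cons n i y) ^ (-(1 / p.toReal))) = 1 := by
        rw [← Real.rpow_add (hϱ _),
          show (-(1 - 1 / p.toReal)) + (-(1 / p.toReal)) = -1 by ring,
          Real.rpow_neg_one, mul_inv_cancel₀ (hϱ _).ne']
      simp only [eq_self_iff_true, if_true, ↓reduceIte, ContinuousMap.one_apply]
      exact_mod_cast key
    · simp [h, Ne.symm h]
  · intro k _ hk
    simp [hk]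
  · simp
end Aux

section Aux2
variable (n : ℕ)

lemma cylCM_zero (w : Fin 0 → Fin n) : cylCM n 0 w = 1 := by
  ext x
  simp only [cylCM, ContinuousMap.coe_mk, ContinuousMap.one_apply]
  exact if_pos (Subsingleton.elim _ w)

lemma cylCM_succ (N : ℕ) (w : Fin (N + 1) → Fin n) :
    cylCM n (N + 1) w = wInd n (w 0) 1 * (cylCM n N (w ∘ Fin.succ)).comp (shiftCM n) := by
  ext x
  simp only [cylCM, wInd, ContinuousMap.mul_apply, ContinuousMap.comp_apply,
    ContinuousMap.coe_mk, shiftCM, ContinuousMap.one_apply]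
  by_cases h : (fun k : Fin (N + 1) => x ↑k) = w
  · rw [if_pos h, if_pos, if_pos]
    · norm_num
    · funext k
      exact congrFun h k.succ
    · exact congrFun h 0
  · rw [if_neg h]
    by_cases h0 : x 0 = w 0
    · by_cases h1 : (fun k : Fin N => shift n x ↑k) = w ∘ Fin.succ
      · exfalso
        apply h
        funext k
        refine Fin.cases ?_ (fun m => ?_) k
        · exact h0
        · exact congrFun h1 m
      · simp [h0, h1]
    · simp [h0]

lemma ind_mul_comp_mul_wInd (j i : Fin n) (b : C(BSpace n, ℂ)) (g : C(BSpace n, ℝ)) :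
    (wInd n j 1 * b.comp (shiftCM n)) * wInd n i g
      = if i = j then wInd n i g * b.comp (shiftCM n) else 0 := by
  ext x
  by_cases h : i = j
  · subst h
    by_cases hx : x 0 = i
    · simp [wInd, hx]
      ring
    · simp [wInd, hx]
  · have hxj : x 0 = i → ¬x 0 = j := fun e1 e2 => h (e1.symm.trans e2)
    by_cases hx : x 0 = i
    · simp [wInd, hx, hxj hx, h]
    · simp [wInd, hx, h]

end Aux2

section Aux3

lemma star_cylCM (n N : ℕ) (w : Fin N → Fin n) : star (cylCM n N w) = cylCM n N w := by
  ext x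
  simp only [ContinuousMap.star_apply, cylCM, ContinuousMap.coe_mk]
  split_ifs <;> simp

lemma cyl_adjoin_dense (n : ℕ) (a : C(BSpace n, ℂ)) :
    a ∈ closure (Algebra.adjoin ℂ {f : C(BSpace n, ℂ) | ∃ N w, f = cylCM n N w}
      : Set C(BSpace n, ℂ)) := by
  set s : Set C(BSpace n, ℂ) := {f | ∃ N w, f = cylCM n N w} with hs
  have hsstar : star s = s := by
    ext f
    constructor
    · intro hf
      obtain ⟨N, w, hw⟩ := (Set.mem_star.mp hf : star f ∈ s)
      have : f = cylCM n N w := by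
        rw [← star_star f, hw, star_cylCM]
      exact ⟨N, w, this⟩
    · rintro ⟨N, w, rfl⟩
      exact Set.mem_star.mpr (by rw [star_cylCM]; exact ⟨N, w, rfl⟩)
  have hsep : (StarAlgebra.adjoin ℂ s).SeparatesPoints := by
    intro x y hxy
    obtain ⟨k, hk⟩ : ∃ k, x k ≠ y k := by
      by_contra h
      push_neg at h
      exact hxy (funext h)
    refine ⟨_, ⟨cylCM n (k + 1) (fun j : Fin (k + 1) => x ↑j),
      StarAlgebra.subset_adjoin ℂ s ⟨k + 1, _, rfl⟩, rfl⟩, ?_⟩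
    have h1 : cylCM n (k + 1) (fun j : Fin (k + 1) => x ↑j) x = 1 := if_pos rfl
    have h0 : cylCM n (k + 1) (fun j : Fin (k + 1) => x ↑j) y = 0 := by
      refine if_neg fun h => hk ?_
      have := congrFun h ⟨k, Nat.lt_succ_self k⟩
      exact this.symm
    show cylCM n (k + 1) (fun j : Fin (k + 1) => x ↑j) x ≠ cylCM n (k + 1) (fun j : Fin (k + 1) => x ↑j) y
    rw [h1, h0]
    exact one_ne_zero
  have htop := ContinuousMap.starSubalgebra_topologicalClosure_eq_top_of_separatesPoints
    (StarAlgebra.adjoin ℂ s) hsep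
  have hmem : a ∈ (StarAlgebra.adjoin ℂ s).topologicalClosure := by
    rw [htop]; trivial
  have hset : ((StarAlgebra.adjoin ℂ s : StarSubalgebra ℂ C(BSpace n, ℂ)) : Set C(BSpace n, ℂ))
      = (Algebra.adjoin ℂ s : Set C(BSpace n, ℂ)) := by
    have h1 : (StarAlgebra.adjoin ℂ s).toSubalgebra = Algebra.adjoin ℂ (s ∪ star s) :=
      StarAlgebra.adjoin_toSubalgebra ℂ s
    calc ((StarAlgebra.adjoin ℂ s : StarSubalgebra ℂ C(BSpace n, ℂ)) : Set C(BSpace n, ℂ))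
        = ((StarAlgebra.adjoin ℂ s).toSubalgebra : Set C(BSpace n, ℂ)) := rfl
      _ = (Algebra.adjoin ℂ (s ∪ star s) : Set C(BSpace n, ℂ)) := by rw [h1]
      _ = _ := by rw [hsstar, Set.union_self]
  have : a ∈ closure ((StarAlgebra.adjoin ℂ s : StarSubalgebra ℂ C(BSpace n, ℂ))
      : Set C(BSpace n, ℂ)) := hmem
  rwa [hset] at this

end Aux3

set_option maxHeartbeats 1000000 in
/-- For a covariant representation `(π,T,S)` of `L` on `L^p_ν(Ω)`:
the smallest closed (unital) subalgebra of `B(L^p_ν(Ω))` containing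
`{π(a) : a ∈ C(X)} ∪ {T, S}` coincides with the smallest closed subalgebra containing
`{T_i, S_i : i = 1,…,n}`. In particular every `π(a)` lies in the latter, and
`T = π(ϱ^{1/p}) Σ_i T_i` and `S = Σ_i S_i π(ϱ^{1/q})` lie in it as well. -/
theorem stmt_8 (n : ℕ) (hn : 2 ≤ n)
    (ϱ : C(BSpace n, ℝ)) (hϱpos : ∀ x, 0 < ϱ x)
    (hϱsum : ∀ y : BSpace n, ∑ i : Fin n, ϱ (cons n i y) = 1)
    {Ω : Type*} [MeasurableSpace Ω] (ν : Measure Ω)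
    (p : ℝ≥0∞) [Fact (1 ≤ p)] (hp : p ≠ ∞)
    (π : C(BSpace n, ℂ) →ₐ[ℂ] (Lp ℂ p ν →L[ℂ] Lp ℂ p ν))
    (T S : Lp ℂ p ν →L[ℂ] Lp ℂ p ν)
    (hπcontr : ∀ a : C(BSpace n, ℂ), ‖π a‖ ≤ ‖a‖)
    (hT : ‖T‖ ≤ 1) (hS : ‖S‖ ≤ 1)
    (hcov1 : ∀ a : C(BSpace n, ℂ), S * π a * T = π (transfer n ϱ a))
    (hcov2 : ∀ a : C(BSpace n, ℂ), T * π a = π (a.comp (shiftCM n)) * T)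
    (hTi : ∀ i : Fin n, ‖TOp n ϱ hϱpos p (fun a => π a) T i‖ ≤ 1)
    (hSi : ∀ i : Fin n, ‖SOp n ϱ hϱpos p (fun a => π a) S i‖ ≤ 1)
    (hsum : ∑ i : Fin n,
      TOp n ϱ hϱpos p (fun a => π a) T i * SOp n ϱ hϱpos p (fun a => π a) S i = 1)
    :
    (Algebra.adjoin ℂ (Set.range (fun a => π a) ∪ {T, S})).topologicalClosure
      = (Algebra.adjoin ℂ (Set.range (TOp n ϱ hϱpos p (fun a => π a) T)
          ∪ Set.range (SOp n ϱ hϱpos p (fun a => π a) S))).topologicalClosure ∧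
    (∀ a : C(BSpace n, ℂ),
      π a ∈ (Algebra.adjoin ℂ (Set.range (TOp n ϱ hϱpos p (fun a => π a) T)
        ∪ Set.range (SOp n ϱ hϱpos p (fun a => π a) S))).topologicalClosure) ∧
    T = π (rhoPowC n ϱ hϱpos (1 / p.toReal)) * ∑ i : Fin n, TOp n ϱ hϱpos p (fun a => π a) T i ∧
    S = (∑ i : Fin n, SOp n ϱ hϱpos p (fun a => π a) S i)
          * π (rhoPowC n ϱ hϱpos (1 - 1 / p.toReal)) ∧
    T ∈ (Algebra.adjoin ℂ (Set.range (TOp n ϱ hϱpos p (fun a => π a) T)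
        ∪ Set.range (SOp n ϱ hϱpos p (fun a => π a) S))).topologicalClosure ∧
    S ∈ (Algebra.adjoin ℂ (Set.range (TOp n ϱ hϱpos p (fun a => π a) T)
        ∪ Set.range (SOp n ϱ hϱpos p (fun a => π a) S))).topologicalClosure := by
  classical
  set Ti := TOp n ϱ hϱpos p (fun a => π a) T with hTidef
  set Si := SOp n ϱ hϱpos p (fun a => π a) S with hSidef
  set B := Algebra.adjoin ℂ (Set.range Ti ∪ Set.range Si) with hBdef
  have hTi_eq : ∀ i, Ti i = π (wInd n i (rhoPow n ϱ hϱpos (-(1 / p.toReal)))) * T :=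
    fun i => rfl
  have hSi_eq : ∀ i, Si i = S * π (wInd n i (rhoPow n ϱ hϱpos (-(1 - 1 / p.toReal)))) :=
    fun i => rfl
  -- key covariance consequence
  have h2 : ∀ (j : Fin n) (b : C(BSpace n, ℂ)),
      π (wInd n j 1 * b.comp (shiftCM n)) = Ti j * π b * Si j := by
    intro j b
    have step : ∀ i, π (wInd n j 1 * b.comp (shiftCM n)) * Ti i
        = if i = j then Ti i * π b else 0 := by
      intro i
      rw [hTi_eq, ← mul_assoc, ← map_mul, ind_mul_comp_mul_wInd]
      by_cases h : i = j
      · rw [if_pos h, if_pos h, map_mul, mul_assoc, ← hcov2 b, ← mul_assoc, ← hTi_eq]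
      · rw [if_neg h, if_neg h, map_zero, zero_mul]
    calc π (wInd n j 1 * b.comp (shiftCM n))
        = π (wInd n j 1 * b.comp (shiftCM n)) * ∑ i, Ti i * Si i := by
          rw [hsum, mul_one]
      _ = ∑ i, π (wInd n j 1 * b.comp (shiftCM n)) * Ti i * Si i := by
          rw [Finset.mul_sum]
          exact Finset.sum_congr rfl fun i _ => (mul_assoc _ _ _).symm
      _ = ∑ i, (if i = j then Ti i * π b else 0) * Si i :=
          Finset.sum_congr rfl fun i _ => by rw [step i]
      _ = ∑ i, if i = j then Ti i * π b * Si i else 0 :=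
          Finset.sum_congr rfl fun i _ => by
            split_ifs with h
            · rfl
            · rw [zero_mul]
      _ = Ti j * π b * Si j := by
          rw [Finset.sum_ite_eq' Finset.univ j]
          simp
  -- cylinder indicators land in B
  have h3 : ∀ (N : ℕ) (w : Fin N → Fin n), π (cylCM n N w) ∈ B := by
    intro N
    induction N with
    | zero =>
      intro w
      rw [cylCM_zero, map_one]
      exact one_mem B
    | succ N ih =>
      intro w
      rw [cylCM_succ, h2]
      exact mul_mem (mul_mem (Algebra.subset_adjoin (Or.inl ⟨w 0, rfl⟩)) (ih _))
        (Algebra.subset_adjoin (Or.inr ⟨w 0, rfl⟩))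
  -- continuity of π
  have hπcont : Continuous (fun a : C(BSpace n, ℂ) => π a) := by
    have hlip : LipschitzWith 1 (fun a : C(BSpace n, ℂ) => π a) := by
      apply LipschitzWith.of_dist_le_mul
      intro a b
      rw [dist_eq_norm, dist_eq_norm, ← map_sub]
      simpa using hπcontr (a - b)
    exact hlip.continuous
  -- all π a lie in the closure of B
  have h5 : ∀ a : C(BSpace n, ℂ), π a ∈ B.topologicalClosure := by
    intro a
    have hmaps : Set.MapsTo (fun a : C(BSpace n, ℂ) => π a)
        (Algebra.adjoin ℂ {f : C(BSpace n, ℂ) | ∃ N w, f = cylCM n N w} : Set C(BSpace n, ℂ))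
        (B : Set (Lp ℂ p ν →L[ℂ] Lp ℂ p ν)) := by
      intro f hf
      induction hf using Algebra.adjoin_induction with
      | mem g hg =>
        obtain ⟨N, w, rfl⟩ := hg
        exact h3 N w
      | algebraMap r =>
        show π (algebraMap ℂ _ r) ∈ B
        rw [AlgHom.commutes]
        exact algebraMap_mem B r
      | add x y hx hy ihx ihy =>
        show π (x + y) ∈ B
        rw [map_add]
        exact add_mem ihx ihy
      | mul x y hx hy ihx ihy =>
        show π (x * y) ∈ B
        rw [map_mul]
        exact mul_mem ihx ihy
    exact map_mem_closure hπcont (cyl_adjoin_dense n a) hmaps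
  -- sum formulas
  have hsumTi : ∑ i, Ti i = π (rhoPowC n ϱ hϱpos (-(1 / p.toReal))) * T := by
    calc ∑ i, Ti i
        = (∑ i, π (wInd n i (rhoPow n ϱ hϱpos (-(1 / p.toReal))))) * T := by
          rw [Finset.sum_mul]
          exact Finset.sum_congr rfl fun i _ => hTi_eq i
      _ = π (∑ i, wInd n i (rhoPow n ϱ hϱpos (-(1 / p.toReal)))) * T := by
          rw [map_sum]
      _ = _ := by rw [sum_wInd_rhoPow]
  have hsumSi : ∑ i, Si i = S * π (rhoPowC n ϱ hϱpos (-(1 - 1 / p.toReal))) := by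
    calc ∑ i, Si i
        = S * (∑ i, π (wInd n i (rhoPow n ϱ hϱpos (-(1 - 1 / p.toReal))))) := by
          rw [Finset.mul_sum]
          exact Finset.sum_congr rfl fun i _ => hSi_eq i
      _ = S * π (∑ i, wInd n i (rhoPow n ϱ hϱpos (-(1 - 1 / p.toReal)))) := by
          rw [map_sum]
      _ = _ := by rw [sum_wInd_rhoPow]
  have hTformula : T = π (rhoPowC n ϱ hϱpos (1 / p.toReal)) * ∑ i, Ti i := by
    rw [hsumTi, ← mul_assoc, ← map_mul, rhoPowC_mul_neg, map_one, one_mul]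
  have hSformula : S = (∑ i, Si i) * π (rhoPowC n ϱ hϱpos (1 - 1 / p.toReal)) := by
    rw [hsumSi, mul_assoc, ← map_mul, mul_comm, rhoPowC_mul_neg, map_one, mul_one]
  -- memberships of T and S
  have hTmem : T ∈ B.topologicalClosure := by
    rw [hTformula]
    exact mul_mem (h5 _) (B.le_topologicalClosure
      (sum_mem fun i _ => Algebra.subset_adjoin (Or.inl ⟨i, rfl⟩)))
  have hSmem : S ∈ B.topologicalClosure := by
    rw [hSformula]
    exact mul_mem (B.le_topologicalClosure
      (sum_mem fun i _ => Algebra.subset_adjoin (Or.inr ⟨i, rfl⟩))) (h5 _)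
  refine ⟨?_, h5, hTformula, hSformula, hTmem, hSmem⟩
  apply le_antisymm
  · apply Subalgebra.topologicalClosure_minimal
    · apply Algebra.adjoin_le
      rintro x (⟨a, rfl⟩ | hx)
      · exact h5 a
      · simp only [Set.mem_insert_iff, Set.mem_singleton_iff] at hx
        rcases hx with rfl | rfl
        · exact hTmem
        · exact hSmem
    · exact Subalgebra.isClosed_topologicalClosure _
  · apply Subalgebra.topologicalClosure_minimal
    swap
    · exact Subalgebra.isClosed_topologicalClosure _
    refine le_trans ?_ (Subalgebra.le_topologicalClosure _)
    apply Algebra.adjoin_le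
    rintro x (⟨i, rfl⟩ | ⟨i, rfl⟩)
    · rw [hTi_eq]
      exact mul_mem (Algebra.subset_adjoin (Or.inl ⟨_, rfl⟩))
        (Algebra.subset_adjoin (Or.inr (Set.mem_insert _ _)))
    · rw [hSi_eq]
      exact mul_mem (Algebra.subset_adjoin (Or.inr (Set.mem_insert_of_mem _ rfl)))
        (Algebra.subset_adjoin (Or.inl ⟨_, rfl⟩))

end
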